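/- Rigid motion estimate on a one-dimensional slice (Remark 4.2). Let q ∈ [1,∞). There is a constant c = c(q) > 0 such that for every H¹-measurable set Γ ⊆ ℝ × {0} ⊂ ℝ² with l := H¹(Γ) < ∞, every skew-symmetric A ∈ ℝ^{2×2} and every b ∈ ℝ² one has l^{q+1}·|A|^q ≤ c·∫_Γ |A·x + b|^q dH¹(x). -/

import Mathlib

open MeasureTheory Set
open scoped ENNReal NNReal

noncomputable section

/-- The Euclidean plane. -/
abbrev E2 := EuclideanSpace ℝ (Fin 2)

/-- Frobenius norm of a `2 × 2` real matrix. -/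
def matNorm (A : Matrix (Fin 2) (Fin 2) ℝ) : ℝ :=
  Real.sqrt (∑ i : Fin 2, ∑ j : Fin 2, (A i j) ^ 2)

/-- The infinitesimal rigid motion `a_{A,b} : x ↦ A x + b`. -/
def rigid (A : Matrix (Fin 2) (Fin 2) ℝ) (b : E2) : E2 → E2 :=
  fun x => Matrix.toEuclideanLin A x + b

/-- Embedding of the line as the `x`-axis in `E2`. -/
def axisEmb : ℝ → E2 := fun t => (WithLp.equiv 2 (Fin 2 → ℝ)).symm ![t, 0]

lemma axisEmb_isometry : Isometry axisEmb := by
  apply Isometry.of_dist_eq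
  intro s t
  rw [EuclideanSpace.dist_eq, Fin.sum_univ_two]
  simp [axisEmb, Real.dist_eq, Real.sqrt_sq_eq_abs]

lemma eq_axisEmb {x : E2} (hx : x 1 = 0) : axisEmb (x 0) = x := by
  ext i
  fin_cases i
  · rfl
  · exact hx.symm

lemma abs_apply_one_le_norm (y : E2) : |y 1| ≤ ‖y‖ := by
  rw [EuclideanSpace.norm_eq, Fin.sum_univ_two, ← Real.sqrt_sq_eq_abs]
  apply Real.sqrt_le_sqrt
  have h0 : (0:ℝ) ≤ ‖y 0‖ ^ 2 := sq_nonneg _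
  have h1 : ‖y 1‖ ^ 2 = (y 1) ^ 2 := by rw [Real.norm_eq_abs, sq_abs]
  nlinarith

lemma rigid_apply_one (A : Matrix (Fin 2) (Fin 2) ℝ) (b : E2) (x : E2) :
    rigid A b x 1 = A 1 0 * x 0 + A 1 1 * x 1 + b 1 := by
  have h1 : rigid A b x 1 = (Matrix.toEuclideanLin A x) 1 + b 1 := rfl
  rw [h1, Matrix.toEuclideanLin_apply]
  have h2 : ((WithLp.equiv 2 (Fin 2 → ℝ)).symm
        (Matrix.mulVec A ((WithLp.equiv 2 (Fin 2 → ℝ)) x))) 1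
      = (Matrix.mulVec A ((WithLp.equiv 2 (Fin 2 → ℝ)) x)) 1 := rfl
  show (Matrix.mulVec A x.ofLp) 1 + b 1 = _
  simp [Matrix.mulVec, dotProduct, Fin.sum_univ_two]

/-- **Rigid motion estimate on a one-dimensional slice** (Remark 4.2). -/
theorem rigid_motion_slice (q : ℝ) (hq : 1 ≤ q) :
    ∃ c : ℝ, 0 < c ∧
      ∀ Γ : Set E2, MeasurableSet Γ → Γ ⊆ {x : E2 | x 1 = 0} → μH[1] Γ < ⊤ →
      ∀ A : Matrix (Fin 2) (Fin 2) ℝ, Matrix.transpose A = -A → ∀ b : E2,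
        (μH[1] Γ) ^ (q + 1) * ENNReal.ofReal (matNorm A ^ q) ≤
          ENNReal.ofReal c * ∫⁻ x in Γ, ENNReal.ofReal (‖rigid A b x‖ ^ q) ∂μH[1] := by
  have hq0 : 0 < q := lt_of_lt_of_le one_pos hq
  refine ⟨2 * (4 * Real.sqrt 2) ^ q, by positivity, ?_⟩
  intro Γ hΓm hΓax hΓfin A hA b
  set c : ℝ := 2 * (4 * Real.sqrt 2) ^ q with hc
  -- basic facts about A
  have hA00 : A 0 0 = 0 := by
    have := congrFun (congrFun hA 0) 0
    simp [Matrix.transpose_apply] at this; linarith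
  have hA11 : A 1 1 = 0 := by
    have := congrFun (congrFun hA 1) 1
    simp [Matrix.transpose_apply] at this; linarith
  have hA01 : A 0 1 = -(A 1 0) := by
    have := congrFun (congrFun hA 1) 0
    simp [Matrix.transpose_apply] at this; linarith
  set a : ℝ := A 1 0 with ha
  have hmat : matNorm A = Real.sqrt 2 * |a| := by
    rw [matNorm, Fin.sum_univ_two, Fin.sum_univ_two, Fin.sum_univ_two, hA00, hA11, hA01]
    rw [show (0:ℝ)^2 + (-a)^2 + (a^2 + 0^2) = 2 * a^2 by ring]
    rw [Real.sqrt_mul (by norm_num), Real.sqrt_sq_eq_abs]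
  by_cases ha0 : a = 0
  · rw [hmat, ha0, abs_zero, mul_zero, Real.zero_rpow hq0.ne', ENNReal.ofReal_zero, mul_zero]
    exact zero_le
  by_cases hl0 : μH[1] Γ = 0
  · rw [hl0, ENNReal.zero_rpow_of_pos (by linarith), zero_mul]
    exact zero_le
  -- main case
  set lr : ℝ := (μH[1] Γ).toReal with hlr
  have hlrpos : 0 < lr := ENNReal.toReal_pos hl0 hΓfin.ne
  have hΓeq : μH[1] Γ = ENNReal.ofReal lr := (ENNReal.ofReal_toReal hΓfin.ne).symm
  have hapos : 0 < |a| := abs_pos.2 ha0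
  set ε : ℝ := |a| * lr / 4 with hε
  have hεpos : 0 < ε := by positivity
  -- the good set
  set T : Set E2 := {x : E2 | ε ≤ |a * x 0 + b 1|} with hT
  -- the bad set has small measure
  have hbad : μH[1] (Γ \ T) ≤ ENNReal.ofReal (lr / 2) := by
    have hsub : Γ \ T ⊆ axisEmb '' (Metric.ball (-(b 1) / a) (ε / |a|)) := by
      rintro x ⟨hxΓ, hxT⟩
      have hx1 : x 1 = 0 := hΓax hxΓ
      have hxval : |a * x 0 + b 1| < ε := not_le.1 hxT
      refine ⟨x 0, ?_, eq_axisEmb hx1⟩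
      rw [Metric.mem_ball, Real.dist_eq]
      have heq : x 0 - -(b 1) / a = (a * x 0 + b 1) / a := by field_simp; ring
      rw [heq, abs_div]
      gcongr
    calc μH[1] (Γ \ T) ≤ μH[1] (axisEmb '' (Metric.ball (-(b 1) / a) (ε / |a|))) :=
          measure_mono hsub
      _ = μH[1] (Metric.ball (-(b 1) / a) (ε / |a|)) :=
          axisEmb_isometry.hausdorffMeasure_image (Or.inl zero_le_one) _
      _ = volume (Metric.ball (-(b 1) / a) (ε / |a|)) := by
          rw [MeasureTheory.hausdorffMeasure_real]
      _ = ENNReal.ofReal (2 * (ε / |a|)) := Real.volume_ball _ _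
      _ = ENNReal.ofReal (lr / 2) := by
          congr 1
          rw [hε]; field_simp; ring
  -- the good set has measure at least lr/2
  have hgood : ENNReal.ofReal (lr / 2) ≤ μH[1] (Γ ∩ T) := by
    have h1 : μH[1] Γ ≤ μH[1] (Γ ∩ T) + μH[1] (Γ \ T) := measure_le_inter_add_diff _ _ _
    have h2 : ENNReal.ofReal (lr / 2) + ENNReal.ofReal (lr / 2)
        ≤ μH[1] (Γ ∩ T) + ENNReal.ofReal (lr / 2) := by
      rw [← ENNReal.ofReal_add (by positivity) (by positivity)]
      rw [show lr / 2 + lr / 2 = lr by ring]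
      exact le_trans (hΓeq ▸ h1) (add_le_add le_rfl hbad)
    exact (ENNReal.add_le_add_iff_right ENNReal.ofReal_ne_top).1 h2
  -- pointwise lower bound on the good set
  have hpt : ∀ x ∈ Γ ∩ T, ENNReal.ofReal (ε ^ q) ≤ ENNReal.ofReal (‖rigid A b x‖ ^ q) := by
    rintro x ⟨hxΓ, hxT⟩
    have hx1 : x 1 = 0 := hΓax hxΓ
    have h1 : |rigid A b x 1| = |a * x 0 + b 1| := by
      rw [rigid_apply_one, hA11, hx1, ← ha]; ring_nf
    have h2 : ε ≤ ‖rigid A b x‖ := le_trans hxT (h1 ▸ abs_apply_one_le_norm _)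
    exact ENNReal.ofReal_le_ofReal (Real.rpow_le_rpow hεpos.le h2 hq0.le)
  -- measurability of the integrand
  have hmeas : Measurable fun x : E2 => ENNReal.ofReal (‖rigid A b x‖ ^ q) := by
    have hcont : Continuous (rigid A b) :=
      ((Matrix.toEuclideanLin A).continuous_of_finiteDimensional).add continuous_const
    exact ((hcont.norm.rpow_const fun x => Or.inr hq0.le)).measurable.ennreal_ofReal
  -- lower bound for the integral
  have hint : ENNReal.ofReal (ε ^ q * (lr / 2)) ≤
      ∫⁻ x in Γ, ENNReal.ofReal (‖rigid A b x‖ ^ q) ∂μH[1] := by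
    calc ENNReal.ofReal (ε ^ q * (lr / 2))
        = ENNReal.ofReal (ε ^ q) * ENNReal.ofReal (lr / 2) :=
          ENNReal.ofReal_mul (by positivity)
      _ ≤ ENNReal.ofReal (ε ^ q) * μH[1] (Γ ∩ T) := by gcongr
      _ = ∫⁻ _ in Γ ∩ T, ENNReal.ofReal (ε ^ q) ∂μH[1] := (setLIntegral_const _ _).symm
      _ ≤ ∫⁻ x in Γ ∩ T, ENNReal.ofReal (‖rigid A b x‖ ^ q) ∂μH[1] :=
          setLIntegral_mono hmeas hpt
      _ ≤ ∫⁻ x in Γ, ENNReal.ofReal (‖rigid A b x‖ ^ q) ∂μH[1] :=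
          lintegral_mono_set inter_subset_left
  -- put it together
  have hLHS : (μH[1] Γ) ^ (q + 1) * ENNReal.ofReal (matNorm A ^ q)
      = ENNReal.ofReal (lr ^ (q + 1) * (Real.sqrt 2 * |a|) ^ q) := by
    rw [hΓeq, hmat, ENNReal.ofReal_rpow_of_pos hlrpos,
      ← ENNReal.ofReal_mul (by positivity)]
  rw [hLHS]
  calc ENNReal.ofReal (lr ^ (q + 1) * (Real.sqrt 2 * |a|) ^ q)
      ≤ ENNReal.ofReal (c * (ε ^ q * (lr / 2))) := by
        apply ENNReal.ofReal_le_ofReal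
        have key : c * (ε ^ q * (lr / 2)) = lr ^ (q + 1) * (Real.sqrt 2 * |a|) ^ q := by
          have s2 : (0:ℝ) < Real.sqrt 2 := by positivity
          calc c * (ε ^ q * (lr / 2))
              = (4 * Real.sqrt 2) ^ q * ε ^ q * lr := by rw [hc]; ring
            _ = ((4 * Real.sqrt 2) * ε) ^ q * lr := by
                rw [← Real.mul_rpow (by positivity) hεpos.le]
            _ = ((Real.sqrt 2 * |a|) * lr) ^ q * lr := by
                congr 2
                rw [hε]; ring
            _ = (Real.sqrt 2 * |a|) ^ q * lr ^ q * lr := by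
                rw [Real.mul_rpow (by positivity) hlrpos.le]
            _ = lr ^ (q + 1) * (Real.sqrt 2 * |a|) ^ q := by
                rw [Real.rpow_add_one hlrpos.ne']; ring
        rw [key]
      _ = ENNReal.ofReal c * ENNReal.ofReal (ε ^ q * (lr / 2)) := by
          rw [ENNReal.ofReal_mul (by positivity)]
      _ ≤ ENNReal.ofReal c * ∫⁻ x in Γ, ENNReal.ofReal (‖rigid A b x‖ ^ q) ∂μH[1] := by
          gcongr
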